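/- arXiv:0904.0899 — 4 statements merged into one kernel-verified Lean document; each statement's English description precedes it below -/
import Mathlib

section
/- Let k be a field and G a group of ring automorphisms of the polynomial ring k[t] each of which maps the subfield k into itself. Then the field of G-invariants of the rational function field k(t) equals the field of fractions of the ring of G-invariant polynomials: every f in k(t)^G can be written as f = u/v with u, v in k[t]^G. -/
open Polynomial

set_option maxHeartbeats 2000000 in
/-- Let `k` be a field and `G` a group acting on `k[t]` by ring
automorphisms mapping `k` into itself (the action is given here by its unique
extension to the fraction field `k(t) = RatFunc k`, which restricts to the
polynomial ring and to the constants).  Then every `G`-invariant element of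
`k(t)` can be written as a quotient `u/v` of two `G`-invariant polynomials. -/
theorem invariant_field_is_fraction_field_of_invariant_polynomials
    (k : Type*) [Field k] (G : Type*) [Group G]
    [MulSemiringAction G (RatFunc k)]
    (hpoly : ∀ (g : G) (p : Polynomial k), ∃ q : Polynomial k,
      g • (algebraMap (Polynomial k) (RatFunc k) p) = algebraMap (Polynomial k) (RatFunc k) q)
    (hconst : ∀ (g : G) (a : k), ∃ b : k, g • (RatFunc.C a) = RatFunc.C b)
    (f : RatFunc k) (hf : ∀ g : G, g • f = f) :
    ∃ u v : Polynomial k, v ≠ 0 ∧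
      (∀ g : G, g • (algebraMap (Polynomial k) (RatFunc k) u)
        = algebraMap (Polynomial k) (RatFunc k) u) ∧
      (∀ g : G, g • (algebraMap (Polynomial k) (RatFunc k) v)
        = algebraMap (Polynomial k) (RatFunc k) v) ∧
      f = algebraMap (Polynomial k) (RatFunc k) u / algebraMap (Polynomial k) (RatFunc k) v := by
  classical
  choose φ hφ using hpoly
  choose σ hσ using hconst
  set A := algebraMap (Polynomial k) (RatFunc k) with hAdef
  have hAinj : Function.Injective A := RatFunc.algebraMap_injective k
  have hCinj : Function.Injective (RatFunc.C : k → RatFunc k) := by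
    intro a b hab
    have : A (Polynomial.C a) = A (Polynomial.C b) := by
      rw [hAdef, RatFunc.algebraMap_C, RatFunc.algebraMap_C, hab]
    exact Polynomial.C_injective (hAinj this)
  -- basic properties of φ
  have hφadd : ∀ (g : G) p q, φ g (p + q) = φ g p + φ g q := by
    intro g p q; apply hAinj
    rw [map_add, ← hφ, ← hφ, ← hφ, map_add, smul_add]
  have hφmul : ∀ (g : G) p q, φ g (p * q) = φ g p * φ g q := by
    intro g p q; apply hAinj
    rw [map_mul, ← hφ, ← hφ, ← hφ, map_mul, smul_mul']
  have hφone : ∀ g : G, φ g 1 = 1 := by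
    intro g; apply hAinj; rw [← hφ, map_one, smul_one]
  have hφzero : ∀ g : G, φ g 0 = 0 := by
    intro g; apply hAinj; rw [← hφ, map_zero, smul_zero]
  have hφpow : ∀ (g : G) p (n : ℕ), φ g (p ^ n) = φ g p ^ n := by
    intro g p n
    induction n with
    | zero => simpa using hφone g
    | succ n ih => rw [pow_succ, pow_succ, hφmul, ih]
  have hφcomp : ∀ (g h : G) p, φ g (φ h p) = φ (g * h) p := by
    intro g h p; apply hAinj; rw [← hφ, ← hφ, ← hφ, mul_smul]
  have hφid : ∀ p, φ (1 : G) p = p := by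
    intro p; apply hAinj; rw [← hφ, one_smul]
  have hφinv : ∀ (g : G) p, φ g⁻¹ (φ g p) = p := by
    intro g p; rw [hφcomp, inv_mul_cancel, hφid]
  have hφne : ∀ (g : G) (p : Polynomial k), p ≠ 0 → φ g p ≠ 0 := by
    intro g p hp h0
    apply hp
    rw [← hφinv g p, h0, hφzero]
  have hφC : ∀ (g : G) a, φ g (Polynomial.C a) = Polynomial.C (σ g a) := by
    intro g a; apply hAinj
    rw [← hφ, hAdef, RatFunc.algebraMap_C, RatFunc.algebraMap_C, hσ]
  -- σ is a ring hom
  have hσone : ∀ g : G, σ g 1 = 1 := by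
    intro g; apply hCinj
    rw [← hσ]
    rw [map_one, smul_one]
  have hσzero : ∀ g : G, σ g 0 = 0 := by
    intro g; apply hCinj
    rw [← hσ]
    rw [map_zero, smul_zero]
  have hσmul : ∀ (g : G) a b, σ g (a * b) = σ g a * σ g b := by
    intro g a b; apply hCinj
    rw [← hσ, map_mul, map_mul, smul_mul', hσ, hσ]
  have hσadd : ∀ (g : G) a b, σ g (a + b) = σ g a + σ g b := by
    intro g a b; apply hCinj
    rw [← hσ, map_add, map_add, smul_add, hσ, hσ]
  let σRH : G → k →+* k := fun g =>
    { toFun := σ g, map_one' := hσone g, map_mul' := hσmul g,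
      map_zero' := hσzero g, map_add' := hσadd g }
  -- representation of φ g as an affine substitution
  have hrep : ∀ (g : G) (p : Polynomial k),
      φ g p = (p.map (σRH g)).comp (φ g Polynomial.X) := by
    intro g p
    induction p using Polynomial.induction_on' with
    | add p q hp hq => rw [hφadd, Polynomial.map_add, Polynomial.add_comp, hp, hq]
    | monomial n a =>
        rw [← Polynomial.C_mul_X_pow_eq_monomial, hφmul, hφC, hφpow,
          Polynomial.map_mul, Polynomial.map_C, Polynomial.map_pow, Polynomial.map_X,
          Polynomial.mul_comp, Polynomial.C_comp, Polynomial.pow_comp, Polynomial.X_comp]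
        rfl
  have hdeg_aux : ∀ (g : G) (p : Polynomial k),
      (φ g p).natDegree = p.natDegree * (φ g Polynomial.X).natDegree := by
    intro g p
    rw [hrep, Polynomial.natDegree_comp, Polynomial.natDegree_map]
  have hdegX : ∀ g : G, (φ g Polynomial.X).natDegree = 1 := by
    intro g
    have h := hdeg_aux g⁻¹ (φ g Polynomial.X)
    rw [hφinv, Polynomial.natDegree_X] at h
    exact Nat.eq_one_of_mul_eq_one_right h.symm
  have hφdeg : ∀ (g : G) (p : Polynomial k), (φ g p).natDegree = p.natDegree := by
    intro g p; rw [hdeg_aux, hdegX, mul_one]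
  -- the action commutes with inverses and division
  have hsmul_ne : ∀ (g : G) (x : RatFunc k), x ≠ 0 → g • x ≠ 0 := by
    intro g x hx h0
    apply hx
    have : x = g⁻¹ • (g • x) := (inv_smul_smul g x).symm
    rw [this, h0, smul_zero]
  have hsmul_inv : ∀ (g : G) (x : RatFunc k), g • x⁻¹ = (g • x)⁻¹ := by
    intro g x
    rcases eq_or_ne x 0 with rfl | hx
    · rw [inv_zero, smul_zero, inv_zero]
    · have h1 : (g • x) * (g • x⁻¹) = 1 := by
        rw [← smul_mul', mul_inv_cancel₀ hx, smul_one]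
      exact eq_inv_of_mul_eq_one_right h1
  have hsmul_div : ∀ (g : G) (x y : RatFunc k), g • (x / y) = g • x / g • y := by
    intro g x y
    rw [div_eq_mul_inv, div_eq_mul_inv, smul_mul', hsmul_inv]
  have hAne : ∀ {p : Polynomial k}, p ≠ 0 → A p ≠ 0 := by
    rw [hAdef]; exact fun hp => RatFunc.algebraMap_ne_zero hp
  have hnum_div_denom : ∀ x : RatFunc k, A x.num / A x.denom = x := by
    rw [hAdef]; exact fun x => RatFunc.num_div_denom x
  -- bounds on num/denom degrees of a quotient
  have measure_le : ∀ (s t : Polynomial k), t ≠ 0 →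
      (A s / A t).num.natDegree ≤ s.natDegree ∧ (A s / A t).denom.natDegree ≤ t.natDegree := by
    rw [hAdef]
    intro s t ht
    constructor
    · rcases eq_or_ne s 0 with rfl | hs
      · simp
      · exact Polynomial.natDegree_le_of_dvd ((RatFunc.num_dvd hs).mpr ⟨t, ht, rfl⟩) hs
    · exact Polynomial.natDegree_le_of_dvd ((RatFunc.denom_dvd ht).mpr ⟨s, rfl⟩) ht
  -- decomposition by division with remainder
  have hdecomp : ∀ s t : Polynomial k, t.Monic →
      A s / A t = A (s /ₘ t) + A (s %ₘ t) / A t := by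
    intro s t hm
    have hAt : A t ≠ 0 := hAne hm.ne_zero
    have h1 : A s = A (s /ₘ t) * A t + A (s %ₘ t) := by
      rw [← map_mul, ← map_add]
      congr 1
      rw [mul_comm, add_comm]
      exact (Polynomial.modByMonic_add_div s t).symm
    rw [h1, add_div, mul_div_cancel_right₀ _ hAt]
  -- key lemma: the polynomial part and proper part of an invariant quotient are invariant
  have keyL : ∀ s t : Polynomial k, t.Monic → 1 ≤ t.natDegree →
      (∀ g : G, g • (A s / A t) = A s / A t) →
      (∀ g : G, g • A (s /ₘ t) = A (s /ₘ t)) ∧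
        (∀ g : G, g • (A (s %ₘ t) / A t) = A (s %ₘ t) / A t) := by
    intro s t hm hdeg1 hinv
    have ht0 : t ≠ 0 := hm.ne_zero
    have ht1 : t ≠ 1 := by
      intro h; rw [h, Polynomial.natDegree_one] at hdeg1; omega
    have hAt : A t ≠ 0 := hAne ht0
    have hrlt : (s %ₘ t).natDegree < t.natDegree :=
      Polynomial.natDegree_modByMonic_lt s hm ht1
    have hqfix : ∀ g : G, φ g (s /ₘ t) = s /ₘ t := by
      intro g
      have hφt0 : φ g t ≠ 0 := hφne g t ht0
      have hAφt : A (φ g t) ≠ 0 := hAne hφt0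
      have h1 : A (φ g (s /ₘ t)) + A (φ g (s %ₘ t)) / A (φ g t)
          = A (s /ₘ t) + A (s %ₘ t) / A t := by
        have h2 := hinv g
        rw [hdecomp s t hm, smul_add, hφ, hsmul_div, hφ, hφ] at h2
        exact h2
      have h4 : A (φ g (s /ₘ t)) - A (s /ₘ t)
          = A (s %ₘ t) / A t - A (φ g (s %ₘ t)) / A (φ g t) := by
        linear_combination h1
      rw [div_sub_div _ _ hAt hAφt, eq_div_iff (mul_ne_zero hAt hAφt)] at h4
      have h3 : (φ g (s /ₘ t) - s /ₘ t) * (t * φ g t)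
          = (s %ₘ t) * φ g t - t * φ g (s %ₘ t) := by
        apply hAinj
        rw [map_mul, map_sub, map_sub, map_mul, map_mul, map_mul]
        linear_combination h4
      by_contra hne
      have hsub : φ g (s /ₘ t) - s /ₘ t ≠ 0 := sub_ne_zero.mpr hne
      have htφt : t * φ g t ≠ 0 := mul_ne_zero ht0 hφt0
      have hL : ((φ g (s /ₘ t) - s /ₘ t) * (t * φ g t)).natDegree
          = (φ g (s /ₘ t) - s /ₘ t).natDegree + (t.natDegree + t.natDegree) := by
        rw [Polynomial.natDegree_mul hsub htφt, Polynomial.natDegree_mul ht0 hφt0, hφdeg]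
      have hR : ((s %ₘ t) * φ g t - t * φ g (s %ₘ t)).natDegree
          ≤ (s %ₘ t).natDegree + t.natDegree := by
        refine le_trans (Polynomial.natDegree_sub_le _ _) (max_le ?_ ?_)
        · exact le_trans Polynomial.natDegree_mul_le (by rw [hφdeg])
        · exact le_trans Polynomial.natDegree_mul_le (by rw [hφdeg, add_comm])
      rw [h3] at hL
      omega
    constructor
    · intro g; rw [hφ, hqfix g]
    · intro g
      have h5 : A (s %ₘ t) / A t = A s / A t - A (s /ₘ t) := by
        rw [hdecomp s t hm]; ring
      rw [h5, smul_sub, hinv g, hφ, hqfix g]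
  -- main induction on the total degree of num and denom
  have main : ∀ (N : ℕ) (x : RatFunc k), (∀ g : G, g • x = x) →
      x.num.natDegree + x.denom.natDegree ≤ N →
      ∃ u v : Polynomial k, v ≠ 0 ∧ (∀ g : G, g • A u = A u) ∧
        (∀ g : G, g • A v = A v) ∧ x = A u / A v := by
    intro N
    induction N using Nat.strong_induction_on with
    | _ N IH =>
    intro x hxinv hdegN
    by_cases hn : x.denom.natDegree = 0
    · -- x is a polynomial
      have hd1 : x.denom = 1 := ((RatFunc.monic_denom x).natDegree_eq_zero).mp hn
      have hxA : x = A x.num := by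
        conv_lhs => rw [← hnum_div_denom x]
        rw [hd1, map_one, div_one]
      exact ⟨x.num, 1, one_ne_zero,
        fun g => by rw [← hxA]; exact hxinv g,
        fun g => by rw [map_one, smul_one],
        by rw [map_one, div_one]; exact hxA⟩
    · have hn1 : 1 ≤ x.denom.natDegree := Nat.one_le_iff_ne_zero.mpr hn
      have hx0 : x ≠ 0 := by
        intro h
        apply hn
        rw [h, RatFunc.denom_zero, Polynomial.natDegree_one]
      have hnum0 : x.num ≠ 0 := RatFunc.num_ne_zero hx0
      have hdenom1 : x.denom ≠ 1 := by
        intro h; rw [h, Polynomial.natDegree_one] at hn1; omega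
      by_cases hmn : x.denom.natDegree ≤ x.num.natDegree
      · -- deg num ≥ deg denom : divide num by denom
        have hinv' : ∀ g : G, g • (A x.num / A x.denom) = A x.num / A x.denom := by
          intro g; rw [hnum_div_denom]; exact hxinv g
        obtain ⟨hq, hr⟩ := keyL x.num x.denom (RatFunc.monic_denom x) hn1 hinv'
        set x' := A (x.num %ₘ x.denom) / A x.denom with hx'def
        obtain ⟨hb1, hb2⟩ := measure_le (x.num %ₘ x.denom) x.denom x.denom_ne_zero
        rw [← hx'def] at hb1 hb2
        have hrlt : (x.num %ₘ x.denom).natDegree < x.denom.natDegree :=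
          Polynomial.natDegree_modByMonic_lt _ (RatFunc.monic_denom x) hdenom1
        have hlt : x'.num.natDegree + x'.denom.natDegree < N := by omega
        obtain ⟨u', v', hv'0, hu', hv', hx'⟩ := IH _ hlt x' hr le_rfl
        have hAv' : A v' ≠ 0 := hAne hv'0
        refine ⟨(x.num /ₘ x.denom) * v' + u', v', hv'0, ?_, hv', ?_⟩
        · intro g
          rw [map_add, map_mul, smul_add, smul_mul', hq g, hu' g, hv' g]
        · rw [map_add, map_mul, add_div, mul_div_cancel_right₀ _ hAv', ← hx', hx'def]
          conv_lhs => rw [← hnum_div_denom x]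
          rw [hdecomp x.num x.denom (RatFunc.monic_denom x)]
      · push_neg at hmn
        have hxinv_inv : ∀ g : G, g • x⁻¹ = x⁻¹ := fun g => by rw [hsmul_inv, hxinv g]
        by_cases hm : x.num.natDegree = 0
        · -- the numerator is a nonzero constant : x⁻¹ is an invariant polynomial
          have hc : x.num = Polynomial.C (x.num.coeff 0) :=
            Polynomial.eq_C_of_natDegree_eq_zero hm
          set c := x.num.coeff 0 with hcdef
          have hc0 : c ≠ 0 := by
            intro h; apply hnum0; rw [hc, h, map_zero]
          set w := x.denom * Polynomial.C c⁻¹ with hw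
          have hw0 : w ≠ 0 :=
            mul_ne_zero x.denom_ne_zero (fun h => inv_ne_zero hc0 (Polynomial.C_eq_zero.mp h))
          have hd : A x.denom ≠ 0 := hAne x.denom_ne_zero
          have hxd : x * A x.denom = A x.num :=
            (eq_div_iff hd).mp (hnum_div_denom x).symm
          have hxw : x * A w = 1 := by
            calc x * A w = (x * A x.denom) * A (Polynomial.C c⁻¹) := by
                  rw [hw, map_mul]; ring
              _ = A (x.num * Polynomial.C c⁻¹) := by rw [hxd, map_mul]
              _ = 1 := by
                  rw [hc, ← Polynomial.C_mul, mul_inv_cancel₀ hc0, Polynomial.C_1, map_one]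
          have hAw : A w = x⁻¹ := eq_inv_of_mul_eq_one_right hxw
          refine ⟨1, w, hw0, fun g => by rw [map_one, smul_one], ?_, ?_⟩
          · intro g; rw [hAw]; exact hxinv_inv g
          · rw [map_one, hAw, one_div, inv_inv]
        · -- 1 ≤ deg num < deg denom : work with x⁻¹
          have hm1 : 1 ≤ x.num.natDegree := Nat.one_le_iff_ne_zero.mpr hm
          have hlc0 : x.num.leadingCoeff ≠ 0 := Polynomial.leadingCoeff_ne_zero.mpr hnum0
          set t' := x.num * Polynomial.C x.num.leadingCoeff⁻¹ with ht'
          set s' := x.denom * Polynomial.C x.num.leadingCoeff⁻¹ with hs'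
          have ht'monic : t'.Monic := Polynomial.monic_mul_leadingCoeff_inv hnum0
          have ht'0 : t' ≠ 0 := ht'monic.ne_zero
          have ht'deg : t'.natDegree = x.num.natDegree :=
            Polynomial.natDegree_mul_C (inv_ne_zero hlc0)
          have hACinv : A (Polynomial.C x.num.leadingCoeff⁻¹) ≠ 0 :=
            hAne (fun h => inv_ne_zero hlc0 (Polynomial.C_eq_zero.mp h))
          have hxinvrep : x⁻¹ = A s' / A t' := by
            have hx' : x⁻¹ = A x.denom / A x.num := by
              conv_lhs => rw [← hnum_div_denom x]
              rw [inv_div]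
            rw [hx', hs', ht', map_mul, map_mul, mul_div_mul_right _ _ hACinv]
          have hinv' : ∀ g : G, g • (A s' / A t') = A s' / A t' := by
            intro g; rw [← hxinvrep]; exact hxinv_inv g
          obtain ⟨hq, hr⟩ := keyL s' t' ht'monic (by rw [ht'deg]; exact hm1) hinv'
          set x'' := A (s' %ₘ t') / A t' with hx''def
          obtain ⟨hb1, hb2⟩ := measure_le (s' %ₘ t') t' ht'0
          rw [← hx''def] at hb1 hb2
          have ht'1 : t' ≠ 1 := by
            intro h; rw [h, Polynomial.natDegree_one] at ht'deg; omega
          have hrlt : (s' %ₘ t').natDegree < t'.natDegree :=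
            Polynomial.natDegree_modByMonic_lt _ ht'monic ht'1
          have hlt : x''.num.natDegree + x''.denom.natDegree < N := by omega
          obtain ⟨u'', v'', hv''0, hu'', hv'', hx''⟩ := IH _ hlt x'' hr le_rfl
          have hAv'' : A v'' ≠ 0 := hAne hv''0
          set U := (s' /ₘ t') * v'' + u'' with hU
          have hxinvU : x⁻¹ = A U / A v'' := by
            rw [hU, map_add, map_mul, add_div, mul_div_cancel_right₀ _ hAv'', ← hx'',
              hx''def, hxinvrep, hdecomp s' t' ht'monic]
          have hU0 : U ≠ 0 := by
            intro h
            apply inv_ne_zero hx0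
            rw [hxinvU, h, map_zero, zero_div]
          refine ⟨v'', U, hU0, hv'', ?_, ?_⟩
          · intro g
            rw [hU, map_add, map_mul, smul_add, smul_mul', hq g, hu'' g, hv'' g]
          · rw [← inv_inv x, hxinvU, inv_div]
  exact main (f.num.natDegree + f.denom.natDegree) f hf le_rfl
end

section
/- Let k be a field and G a group of ring automorphisms of the polynomial ring k[t] each of which maps the subfield k into itself. Then there exists an invariant polynomial p in k[t]^G such that k(t)^G = k^G(p), the subfield of k(t) generated by the fixed field k^G and p. Moreover, if k[t]^G is not contained in k, then p may be taken to be an element of minimal degree in k[t]^G \ k, and for such p one has k[t]^G = k^G[p]; if instead k[t]^G is contained in k, then k(t)^G = k^G. -/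
open Polynomial

namespace InvAux

variable {k : Type*} [Field k] {G : Type*} [Group G] [MulSemiringAction G (RatFunc k)]

variable (hpoly : ∀ (g : G) (p : Polynomial k), ∃ q : Polynomial k,
      g • (algebraMap (Polynomial k) (RatFunc k) p) = algebraMap (Polynomial k) (RatFunc k) q)
variable (hconst : ∀ (g : G) (a : k), ∃ b : k, g • (RatFunc.C a) = RatFunc.C b)

noncomputable def psi (g : G) (q : Polynomial k) : Polynomial k :=
  Classical.choose (hpoly g q)

theorem psi_spec (g : G) (q : Polynomial k) :
    algebraMap (Polynomial k) (RatFunc k) (psi hpoly g q)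
      = g • algebraMap (Polynomial k) (RatFunc k) q :=
  (Classical.choose_spec (hpoly g q)).symm

theorem iota_inj : Function.Injective (algebraMap (Polynomial k) (RatFunc k)) :=
  RatFunc.algebraMap_injective k

theorem psi_add (g : G) (q r : Polynomial k) :
    psi hpoly g (q + r) = psi hpoly g q + psi hpoly g r := by
  apply iota_inj
  rw [map_add, psi_spec, psi_spec, psi_spec, map_add, smul_add]

theorem psi_mul (g : G) (q r : Polynomial k) :
    psi hpoly g (q * r) = psi hpoly g q * psi hpoly g r := by
  apply iota_inj
  rw [map_mul, psi_spec, psi_spec, psi_spec, map_mul, smul_mul']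

theorem psi_zero (g : G) : psi hpoly g 0 = 0 := by
  apply iota_inj; rw [psi_spec, map_zero, smul_zero]

theorem psi_one (g : G) : psi hpoly g 1 = 1 := by
  apply iota_inj; rw [psi_spec, map_one, smul_one]

theorem psi_psi (g h : G) (q : Polynomial k) :
    psi hpoly g (psi hpoly h q) = psi hpoly (g * h) q := by
  apply iota_inj; rw [psi_spec, psi_spec, psi_spec, mul_smul]

theorem psi_id (q : Polynomial k) : psi hpoly 1 q = q := by
  apply iota_inj; rw [psi_spec, one_smul]

theorem psi_cancel (g : G) (q : Polynomial k) : psi hpoly g (psi hpoly g⁻¹ q) = q := by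
  rw [psi_psi, mul_inv_cancel, psi_id]

theorem psi_cancel' (g : G) (q : Polynomial k) : psi hpoly g⁻¹ (psi hpoly g q) = q := by
  rw [psi_psi, inv_mul_cancel, psi_id]

theorem psi_injective (g : G) : Function.Injective (psi hpoly g : Polynomial k → Polynomial k) :=
  Function.LeftInverse.injective (psi_cancel' hpoly g)

theorem psi_ne_zero (g : G) {q : Polynomial k} (hq : q ≠ 0) : psi hpoly g q ≠ 0 := by
  intro h
  exact hq (psi_injective hpoly g (h.trans (psi_zero hpoly g).symm))

noncomputable def sigma (g : G) (a : k) : k := Classical.choose (hconst g a)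

theorem sigma_spec (g : G) (a : k) : g • (RatFunc.C a) = RatFunc.C (sigma hconst g a) :=
  Classical.choose_spec (hconst g a)

theorem psi_C (g : G) (a : k) : psi hpoly g (C a) = C (sigma hconst g a) := by
  apply iota_inj
  rw [psi_spec, RatFunc.algebraMap_C, RatFunc.algebraMap_C, sigma_spec]

theorem ratC_inj : Function.Injective (RatFunc.C : k → RatFunc k) := by
  intro a b h
  have : algebraMap (Polynomial k) (RatFunc k) (C a) = algebraMap (Polynomial k) (RatFunc k) (C b) := by
    rwa [RatFunc.algebraMap_C, RatFunc.algebraMap_C]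
  exact C_injective (iota_inj this)

noncomputable def sigmaHom (g : G) : k →+* k where
  toFun := sigma hconst g
  map_one' := by
    apply ratC_inj; rw [← sigma_spec, map_one, smul_one]
  map_mul' a b := by
    apply ratC_inj
    rw [← sigma_spec, map_mul, map_mul, smul_mul', sigma_spec, sigma_spec]
  map_zero' := by
    apply ratC_inj; rw [← sigma_spec, map_zero, smul_zero]
  map_add' a b := by
    apply ratC_inj
    rw [← sigma_spec, map_add, map_add, smul_add, sigma_spec, sigma_spec]

theorem psi_C' (g : G) (a : k) : psi hpoly g (C a) = C (sigmaHom hconst g a) :=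
  psi_C hpoly hconst g a

theorem psi_eq_comp (g : G) (q : Polynomial k) :
    psi hpoly g q = (q.map (sigmaHom hconst g)).comp (psi hpoly g X) := by
  induction q using Polynomial.induction_on with
  | C a => rw [psi_C' hpoly hconst, map_C, C_comp]
  | add p q hp hq => rw [psi_add, Polynomial.map_add, add_comp, hp, hq]
  | monomial n a ih =>
      have : (C a : Polynomial k) * X ^ (n + 1) = C a * X ^ n * X := by ring
      rw [this, psi_mul, Polynomial.map_mul, mul_comp, ih, Polynomial.map_X, X_comp]

include hconst in
theorem natDegree_psi_X (g : G) : (psi hpoly g (X : Polynomial k)).natDegree = 1 := by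
  have h := psi_cancel hpoly g (X : Polynomial k)
  rw [psi_eq_comp hpoly hconst g] at h
  have := congrArg natDegree h
  rw [natDegree_comp, natDegree_X] at this
  exact Nat.eq_one_of_mul_eq_one_left this

include hconst in
theorem natDegree_psi (g : G) (q : Polynomial k) :
    (psi hpoly g q).natDegree = q.natDegree := by
  rw [psi_eq_comp hpoly hconst g, natDegree_comp, natDegree_psi_X hpoly hconst,
    mul_one, natDegree_map]

include hconst in
theorem degree_psi (g : G) (q : Polynomial k) : (psi hpoly g q).degree = q.degree := by
  by_cases hq : q = 0
  · rw [hq, psi_zero]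
  · rw [degree_eq_natDegree hq, degree_eq_natDegree (psi_ne_zero hpoly g hq),
      natDegree_psi hpoly hconst]

end InvAux

namespace InvAux

variable {k : Type*} [Field k] {G : Type*} [Group G] [MulSemiringAction G (RatFunc k)]

variable (hpoly : ∀ (g : G) (p : Polynomial k), ∃ q : Polynomial k,
      g • (algebraMap (Polynomial k) (RatFunc k) p) = algebraMap (Polynomial k) (RatFunc k) q)
variable (hconst : ∀ (g : G) (a : k), ∃ b : k, g • (RatFunc.C a) = RatFunc.C b)

local notation "ι" => algebraMap (Polynomial k) (RatFunc k)

theorem psi_eq_iff (g : G) (u : Polynomial k) :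
    psi hpoly g u = u ↔ g • (ι u) = ι u := by
  rw [← psi_spec hpoly]
  exact ⟨fun h => congrArg _ h, fun h => iota_inj h⟩

/-- The image of the fixed subfield of `k`. -/
def Sset (k : Type*) [Field k] (G : Type*) [Group G] [MulSemiringAction G (RatFunc k)] :
    Set (RatFunc k) :=
  {x : RatFunc k | (∃ a : k, x = RatFunc.C a) ∧ ∀ g : G, g • x = x}

/-- The set of invariant polynomials (as elements of `RatFunc k`). -/
def Tset (k : Type*) [Field k] (G : Type*) [Group G] [MulSemiringAction G (RatFunc k)] :
    Set (RatFunc k) :=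
  {x : RatFunc k | ∃ w : Polynomial k,
    (∀ g : G, g • (algebraMap (Polynomial k) (RatFunc k) w)
      = algebraMap (Polynomial k) (RatFunc k) w) ∧
    x = algebraMap (Polynomial k) (RatFunc k) w}

include hconst in
theorem key_div (g : G) {c : k} {u v s r : Polynomial k} (hv : v ≠ 0)
    (hu : psi hpoly g u = Polynomial.C c * u) (hvv : psi hpoly g v = Polynomial.C c * v)
    (huv : u = v * s + r) (hr : r.degree < v.degree) :
    psi hpoly g s = s ∧ psi hpoly g r = Polynomial.C c * r := by
  have hc : c ≠ 0 := by
    intro h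
    apply psi_ne_zero hpoly g hv
    rw [hvv, h, Polynomial.C_0, zero_mul]
  have h1 : Polynomial.C c * u = Polynomial.C c * v * psi hpoly g s + psi hpoly g r := by
    rw [← hu]
    conv_lhs => rw [huv]
    rw [psi_add, psi_mul, hvv]
  have h3 : v * (Polynomial.C c * (psi hpoly g s - s)) = Polynomial.C c * r - psi hpoly g r := by
    have h2 : Polynomial.C c * u = Polynomial.C c * v * s + Polynomial.C c * r := by
      rw [huv]; ring
    linear_combination h2 - h1
  have hs : psi hpoly g s = s := by
    by_contra hne
    have hsub : psi hpoly g s - s ≠ 0 := sub_ne_zero.mpr hne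
    have hled : v.degree ≤ (v * (Polynomial.C c * (psi hpoly g s - s))).degree := by
      rw [Polynomial.degree_mul]
      refine le_add_of_nonneg_right ?_
      rw [Polynomial.degree_C_mul hc]
      exact Polynomial.zero_le_degree_iff.mpr hsub
    have hrd : (Polynomial.C c * r - psi hpoly g r).degree < v.degree := by
      refine lt_of_le_of_lt (Polynomial.degree_sub_le _ _) (max_lt ?_ ?_)
      · rwa [Polynomial.degree_C_mul hc]
      · rwa [degree_psi hpoly hconst]
    rw [h3] at hled
    exact absurd (lt_of_le_of_lt hled hrd) (lt_irrefl _)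
  refine ⟨hs, ?_⟩
  rw [hs, sub_self, mul_zero, mul_zero] at h3
  exact (sub_eq_zero.mp h3.symm).symm

include hconst in
theorem fixed_semi {x : RatFunc k} (hx : ∀ g : G, g • x = x) (hx0 : x ≠ 0) (g : G) :
    ∃ c : k, psi hpoly g x.num = Polynomial.C c * x.num ∧
      psi hpoly g x.denom = Polynomial.C c * x.denom := by
  have hv : x.denom ≠ 0 := x.denom_ne_zero
  have hu0 : x.num ≠ 0 := RatFunc.num_ne_zero hx0
  have hnd : ι x.num = x * ι x.denom := by
    have h := RatFunc.num_div_denom x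
    rwa [div_eq_iff (RatFunc.algebraMap_ne_zero hv)] at h
  have hg : ι (psi hpoly g x.num) = x * ι (psi hpoly g x.denom) := by
    rw [psi_spec, psi_spec, hnd, smul_mul', hx g]
  have hkey : psi hpoly g x.num * x.denom = x.num * psi hpoly g x.denom := by
    apply iota_inj
    rw [map_mul, map_mul, hg, hnd]
    ring
  have hdvd : x.denom ∣ psi hpoly g x.denom := by
    refine (RatFunc.isCoprime_num_denom x).symm.dvd_of_dvd_mul_left ?_
    exact ⟨psi hpoly g x.num, by rw [← hkey]; ring⟩
  obtain ⟨w, hw⟩ := hdvd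
  have hw0 : w ≠ 0 := by
    intro h
    exact psi_ne_zero hpoly g hv (by rw [hw, h, mul_zero])
  have hwdeg : w.natDegree = 0 := by
    have := natDegree_psi hpoly hconst g x.denom
    rw [hw, Polynomial.natDegree_mul hv hw0] at this
    omega
  refine ⟨w.coeff 0, ?_, ?_⟩
  · have hvv : psi hpoly g x.denom = Polynomial.C (w.coeff 0) * x.denom := by
      rw [hw, ← Polynomial.eq_C_of_natDegree_eq_zero hwdeg, mul_comm]
    apply mul_right_cancel₀ hv
    rw [hkey, hvv]
    ring
  · rw [hw, ← Polynomial.eq_C_of_natDegree_eq_zero hwdeg, mul_comm]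

end InvAux

namespace InvAux

variable {k : Type*} [Field k] {G : Type*} [Group G] [MulSemiringAction G (RatFunc k)]

variable (hpoly : ∀ (g : G) (p : Polynomial k), ∃ q : Polynomial k,
      g • (algebraMap (Polynomial k) (RatFunc k) p) = algebraMap (Polynomial k) (RatFunc k) q)
variable (hconst : ∀ (g : G) (a : k), ∃ b : k, g • (RatFunc.C a) = RatFunc.C b)

local notation "ι" => algebraMap (Polynomial k) (RatFunc k)

theorem mem_Tset_of_inv {w : Polynomial k} (hw : ∀ g : G, psi hpoly g w = w) :
    ι w ∈ Tset k G :=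
  ⟨w, fun g => (psi_eq_iff hpoly g w).mp (hw g), rfl⟩

include hconst in
theorem euclid_base {u v : Polynomial k} (hv : v ≠ 0) (hvdeg : v.natDegree = 0)
    (hsemi : ∀ g : G, ∃ c : k, psi hpoly g u = Polynomial.C c * u ∧
      psi hpoly g v = Polynomial.C c * v) :
    ι u / ι v ∈ Subfield.closure (Tset k G) := by
  set a := v.coeff 0 with ha_def
  have hva : v = Polynomial.C a := Polynomial.eq_C_of_natDegree_eq_zero hvdeg
  have ha : a ≠ 0 := fun h => hv (by rw [hva, h, Polynomial.C_0])
  have hwin : ∀ g : G, psi hpoly g (Polynomial.C a⁻¹ * u) = Polynomial.C a⁻¹ * u := by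
    intro g
    obtain ⟨c, hu, hvv⟩ := hsemi g
    rw [hva, psi_C' hpoly hconst, ← Polynomial.C_mul] at hvv
    have hsa : sigmaHom hconst g a = c * a := Polynomial.C_injective hvv
    have hc : c ≠ 0 := by
      intro h
      exact (map_ne_zero_iff _ (sigmaHom hconst g).injective).mpr ha (by rw [hsa, h, zero_mul])
    rw [psi_mul, psi_C' hpoly hconst, hu, map_inv₀, hsa, ← mul_assoc, ← Polynomial.C_mul]
    congr 2
    field_simp
  have heq : ι u / ι v = ι (Polynomial.C a⁻¹ * u) := by
    rw [div_eq_iff (RatFunc.algebraMap_ne_zero hv), ← map_mul]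
    congr 1
    rw [hva, mul_comm (Polynomial.C a⁻¹) u, mul_assoc, ← Polynomial.C_mul,
      inv_mul_cancel₀ ha, Polynomial.C_1, mul_one]
  rw [heq]
  exact Subfield.subset_closure (mem_Tset_of_inv hpoly (hwin))

include hconst in
theorem euclid (N : ℕ) :
    ∀ u v : Polynomial k, v ≠ 0 → IsCoprime u v →
    (∀ g : G, ∃ c : k, psi hpoly g u = Polynomial.C c * u ∧
      psi hpoly g v = Polynomial.C c * v) →
    u.natDegree + 2 * v.natDegree ≤ N →
    ι u / ι v ∈ Subfield.closure (Tset k G) := by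
  induction N with
  | zero =>
    intro u v hv hcop hsemi hN
    exact euclid_base hpoly hconst hv (by omega) hsemi
  | succ N ih =>
    intro u v hv hcop hsemi hN
    by_cases hvdeg : v.natDegree = 0
    · exact euclid_base hpoly hconst hv hvdeg hsemi
    by_cases hu0 : u = 0
    · rw [hu0, map_zero, zero_div]
      exact zero_mem _
    by_cases hlt : u.natDegree < v.natDegree
    · have hrec := ih v u hu0 hcop.symm
        (fun g => by obtain ⟨c, h1, h2⟩ := hsemi g; exact ⟨c, h2, h1⟩) (by omega)
      rw [← inv_div]
      exact inv_mem hrec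
    · -- divide u by v
      set s := u / v with hs_def
      set r := u % v with hr_def
      have huv : u = v * s + r := (EuclideanDomain.div_add_mod u v).symm
      have hrdeg : r.degree < v.degree := EuclideanDomain.mod_lt _ hv
      have hr0 : r ≠ 0 := by
        intro h
        rw [h, add_zero] at huv
        have : IsUnit v := hcop.isUnit_of_dvd' ⟨s, huv⟩ dvd_rfl
        exact hvdeg (Polynomial.natDegree_eq_zero_of_isUnit this)
      have hsr : (∀ g : G, psi hpoly g s = s) ∧
          (∀ g : G, ∃ c : k, psi hpoly g r = Polynomial.C c * r ∧
            psi hpoly g v = Polynomial.C c * v) := by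
        constructor
        · intro g
          obtain ⟨c, h1, h2⟩ := hsemi g
          exact (key_div hpoly hconst g hv h1 h2 huv hrdeg).1
        · intro g
          obtain ⟨c, h1, h2⟩ := hsemi g
          exact ⟨c, (key_div hpoly hconst g hv h1 h2 huv hrdeg).2, h2⟩
      have hcop' : IsCoprime r v := by
        have h : IsCoprime (r + v * s) v := by
          rw [add_comm, ← huv]; exact hcop
        exact h.of_add_mul_left_left
      have hrnat : r.natDegree < v.natDegree :=
        Polynomial.natDegree_lt_natDegree hr0 hrdeg
      have hrec := ih r v hv hcop' hsr.2 (by omega)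
      have heq : ι u / ι v = ι s + ι r / ι v := by
        have hvne : (ι v : RatFunc k) ≠ 0 := RatFunc.algebraMap_ne_zero hv
        rw [huv]
        push_cast [map_add, map_mul]
        field_simp
      rw [heq]
      exact add_mem (Subfield.subset_closure (mem_Tset_of_inv hpoly hsr.1)) hrec

include hpoly hconst in
theorem fixed_mem_closureT {x : RatFunc k} (hx : ∀ g : G, g • x = x) :
    x ∈ Subfield.closure (Tset k G) := by
  by_cases hx0 : x = 0
  · rw [hx0]; exact zero_mem _
  · have h := euclid hpoly hconst (x.num.natDegree + 2 * x.denom.natDegree) x.num x.denom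
      x.denom_ne_zero (RatFunc.isCoprime_num_denom x)
      (fun g => fixed_semi hpoly hconst hx hx0 g) le_rfl
    rwa [RatFunc.num_div_denom] at h

end InvAux

namespace InvAux

variable {k : Type*} [Field k] {G : Type*} [Group G] [MulSemiringAction G (RatFunc k)]

variable (hpoly : ∀ (g : G) (p : Polynomial k), ∃ q : Polynomial k,
      g • (algebraMap (Polynomial k) (RatFunc k) p) = algebraMap (Polynomial k) (RatFunc k) q)
variable (hconst : ∀ (g : G) (a : k), ∃ b : k, g • (RatFunc.C a) = RatFunc.C b)

local notation "ι" => algebraMap (Polynomial k) (RatFunc k)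

theorem mem_Sset_of_constant {u : Polynomial k} {a : k} (hua : u = Polynomial.C a)
    (hu : ∀ g : G, psi hpoly g u = u) : ι u ∈ Sset k G := by
  constructor
  · exact ⟨a, by rw [hua, RatFunc.algebraMap_C]⟩
  · intro g
    exact (psi_eq_iff hpoly g u).mp (hu g)

include hconst in
theorem invpoly_mem {p : Polynomial k} (hp : ∀ g : G, psi hpoly g p = p)
    (hpc : ∀ a : k, p ≠ Polynomial.C a)
    (hmin : ∀ q : Polynomial k, (∀ g : G, psi hpoly g q = q) →
      (∀ a : k, q ≠ Polynomial.C a) → p.natDegree ≤ q.natDegree) :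
    ∀ (n : ℕ) (u : Polynomial k), u.natDegree ≤ n → (∀ g : G, psi hpoly g u = u) →
      ι u ∈ Subring.closure (Sset k G ∪ {ι p}) := by
  have hp0 : p ≠ 0 := fun h => hpc 0 (by rw [h, Polynomial.C_0])
  have hpdeg : p.natDegree ≠ 0 := by
    intro h
    obtain ⟨a, ha⟩ := Polynomial.natDegree_eq_zero.mp h
    exact hpc a ha.symm
  have hconstcase : ∀ u : Polynomial k, u.natDegree = 0 → (∀ g : G, psi hpoly g u = u) →
      ι u ∈ Subring.closure (Sset k G ∪ {ι p}) := by
    intro u hdeg hu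
    exact Subring.subset_closure (Set.mem_union_left _
      (mem_Sset_of_constant hpoly (Polynomial.eq_C_of_natDegree_eq_zero hdeg) hu))
  intro n
  induction n with
  | zero =>
    intro u hdeg hu
    exact hconstcase u (Nat.le_zero.mp hdeg) hu
  | succ n ih =>
    intro u hdeg hu
    by_cases hu0 : u.natDegree = 0
    · exact hconstcase u hu0 hu
    set s := u / p with hs_def
    set r := u % p with hr_def
    have huv : u = p * s + r := (EuclideanDomain.div_add_mod u p).symm
    have hrdeg : r.degree < p.degree := EuclideanDomain.mod_lt _ hp0
    have hkd : ∀ g : G, psi hpoly g s = s ∧ psi hpoly g r = r := by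
      intro g
      have h1 : psi hpoly g u = Polynomial.C 1 * u := by
        rw [Polynomial.C_1, one_mul]; exact hu g
      have h2 : psi hpoly g p = Polynomial.C 1 * p := by
        rw [Polynomial.C_1, one_mul]; exact hp g
      obtain ⟨hs, hr⟩ := key_div hpoly hconst g hp0 h1 h2 huv hrdeg
      exact ⟨hs, by rwa [Polynomial.C_1, one_mul] at hr⟩
    have hrconst : ∃ a : k, r = Polynomial.C a := by
      by_contra hrc
      push_neg at hrc
      have h1 := hmin r (fun g => (hkd g).2) hrc
      have hr0 : r ≠ 0 := fun h => hrc 0 (by rw [h, Polynomial.C_0])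
      have := Polynomial.natDegree_lt_natDegree hr0 hrdeg
      omega
    obtain ⟨a, ha⟩ := hrconst
    have hs0 : s ≠ 0 := by
      intro h
      rw [h, mul_zero, zero_add] at huv
      exact hu0 (by rw [huv, ha, Polynomial.natDegree_C])
    have hsdeg : s.natDegree ≤ n := by
      have hdu : u.degree = (p * s).degree := by
        rw [huv]
        refine Polynomial.degree_add_eq_left_of_degree_lt ?_
        refine lt_of_lt_of_le hrdeg ?_
        rw [Polynomial.degree_mul]
        refine le_add_of_nonneg_right ?_
        exact Polynomial.zero_le_degree_iff.mpr hs0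
      have hnu : u.natDegree = p.natDegree + s.natDegree := by
        have h2 : u ≠ 0 := fun h => hu0 (by rw [h, Polynomial.natDegree_zero])
        calc u.natDegree = (p * s).natDegree := Polynomial.natDegree_eq_of_degree_eq hdu
          _ = p.natDegree + s.natDegree := Polynomial.natDegree_mul hp0 hs0
      omega
    have hsmem := ih s hsdeg (fun g => (hkd g).1)
    have hrmem : ι r ∈ Subring.closure (Sset k G ∪ {ι p}) :=
      Subring.subset_closure (Set.mem_union_left _
        (mem_Sset_of_constant hpoly ha (fun g => (hkd g).2)))
    have hpmem : ι p ∈ Subring.closure (Sset k G ∪ {ι p}) :=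
      Subring.subset_closure (Set.mem_union_right _ rfl)
    have : ι u = ι p * ι s + ι r := by
      rw [← map_mul, ← map_add, ← huv]
    rw [this]
    exact add_mem (mul_mem hpmem hsmem) hrmem

/-- The subring of images of invariant polynomials. -/
def invPolySubring (k : Type*) [Field k] (G : Type*) [Group G]
    [MulSemiringAction G (RatFunc k)] : Subring (RatFunc k) where
  carrier := {x : RatFunc k | ∃ u : Polynomial k,
    (∀ g : G, g • (algebraMap (Polynomial k) (RatFunc k) u)
      = algebraMap (Polynomial k) (RatFunc k) u) ∧
    x = algebraMap (Polynomial k) (RatFunc k) u}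
  zero_mem' := ⟨0, fun g => by rw [map_zero, smul_zero], by rw [map_zero]⟩
  one_mem' := ⟨1, fun g => by rw [map_one, smul_one], by rw [map_one]⟩
  add_mem' := by
    rintro x y ⟨u, hu, rfl⟩ ⟨v, hv, rfl⟩
    exact ⟨u + v, fun g => by rw [map_add, smul_add, hu, hv], by rw [map_add]⟩
  mul_mem' := by
    rintro x y ⟨u, hu, rfl⟩ ⟨v, hv, rfl⟩
    exact ⟨u * v, fun g => by rw [map_mul, smul_mul', hu, hv], by rw [map_mul]⟩
  neg_mem' := by
    rintro x ⟨u, hu, rfl⟩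
    exact ⟨-u, fun g => by rw [map_neg, smul_neg, hu], by rw [map_neg]⟩

end InvAux

namespace InvAux

variable {k : Type*} [Field k] {G : Type*} [Group G] [MulSemiringAction G (RatFunc k)]

variable (hpoly : ∀ (g : G) (p : Polynomial k), ∃ q : Polynomial k,
      g • (algebraMap (Polynomial k) (RatFunc k) p) = algebraMap (Polynomial k) (RatFunc k) q)
variable (hconst : ∀ (g : G) (a : k), ∃ b : k, g • (RatFunc.C a) = RatFunc.C b)

local notation "ι" => algebraMap (Polynomial k) (RatFunc k)

theorem mem_fixed_iff (x : RatFunc k) :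
    x ∈ FixedPoints.subfield G (RatFunc k) ↔ ∀ g : G, g • x = x :=
  Iff.rfl

include hpoly hconst in
theorem stmt3_field {p : Polynomial k}
    (hpinv : ∀ g : G, g • (ι p) = ι p)
    (hpc : ∀ a : k, p ≠ Polynomial.C a)
    (hmin : ∀ q : Polynomial k, (∀ g : G, g • (ι q) = ι q) →
      (∀ a : k, q ≠ Polynomial.C a) → p.natDegree ≤ q.natDegree) :
    FixedPoints.subfield G (RatFunc k) = Subfield.closure (Sset k G ∪ {ι p}) := by
  have hp' : ∀ g : G, psi hpoly g p = p := fun g => (psi_eq_iff hpoly g p).mpr (hpinv g)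
  have hmin' : ∀ q : Polynomial k, (∀ g : G, psi hpoly g q = q) →
      (∀ a : k, q ≠ Polynomial.C a) → p.natDegree ≤ q.natDegree := by
    intro q hq hqc
    exact hmin q (fun g => (psi_eq_iff hpoly g q).mp (hq g)) hqc
  apply le_antisymm
  · intro x hx
    have hx' : ∀ g : G, g • x = x := (mem_fixed_iff x).mp hx
    have h1 : x ∈ Subfield.closure (Tset k G) := fixed_mem_closureT hpoly hconst hx'
    have h2 : Subfield.closure (Tset k G) ≤ Subfield.closure (Sset k G ∪ {ι p}) := by
      rw [Subfield.closure_le]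
      rintro y ⟨w, hwinv, rfl⟩
      have hw' : ∀ g : G, psi hpoly g w = w := fun g => (psi_eq_iff hpoly g w).mpr (hwinv g)
      have h3 : ι w ∈ Subring.closure (Sset k G ∪ {ι p}) :=
        invpoly_mem hpoly hconst hp' hpc hmin' w.natDegree w le_rfl hw'
      have h4 : Subring.closure (Sset k G ∪ {ι p}) ≤
          (Subfield.closure (Sset k G ∪ {ι p})).toSubring :=
        Subring.closure_le.mpr Subfield.subset_closure
      exact h4 h3
    exact h2 h1
  · rw [Subfield.closure_le]
    rintro x (⟨_, hfix⟩ | rfl)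
    · exact (mem_fixed_iff x).mpr hfix
    · exact (mem_fixed_iff _).mpr hpinv

include hpoly hconst in
theorem stmt2 (hall : ∀ q : Polynomial k, (∀ g : G, g • (ι q) = ι q) →
      ∃ a : k, q = Polynomial.C a) :
    FixedPoints.subfield G (RatFunc k) = Subfield.closure (Sset k G) := by
  apply le_antisymm
  · intro x hx
    have hx' : ∀ g : G, g • x = x := (mem_fixed_iff x).mp hx
    have h1 : x ∈ Subfield.closure (Tset k G) := fixed_mem_closureT hpoly hconst hx'
    have h2 : Subfield.closure (Tset k G) ≤ Subfield.closure (Sset k G) := by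
      rw [Subfield.closure_le]
      rintro y ⟨w, hwinv, rfl⟩
      obtain ⟨a, ha⟩ := hall w hwinv
      refine Subfield.subset_closure ?_
      refine ⟨⟨a, by rw [ha, RatFunc.algebraMap_C]⟩, hwinv⟩
    exact h2 h1
  · rw [Subfield.closure_le]
    rintro x ⟨_, hfix⟩
    exact (mem_fixed_iff x).mpr hfix

include hpoly hconst in
theorem stmt3_ring {p : Polynomial k}
    (hpinv : ∀ g : G, g • (ι p) = ι p)
    (hpc : ∀ a : k, p ≠ Polynomial.C a)
    (hmin : ∀ q : Polynomial k, (∀ g : G, g • (ι q) = ι q) →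
      (∀ a : k, q ≠ Polynomial.C a) → p.natDegree ≤ q.natDegree) :
    {x : RatFunc k | ∃ u : Polynomial k, (∀ g : G, g • (ι u) = ι u) ∧ x = ι u} =
      ↑(Subring.closure (Sset k G ∪ {ι p})) := by
  have hp' : ∀ g : G, psi hpoly g p = p := fun g => (psi_eq_iff hpoly g p).mpr (hpinv g)
  have hmin' : ∀ q : Polynomial k, (∀ g : G, psi hpoly g q = q) →
      (∀ a : k, q ≠ Polynomial.C a) → p.natDegree ≤ q.natDegree := by
    intro q hq hqc
    exact hmin q (fun g => (psi_eq_iff hpoly g q).mp (hq g)) hqc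
  ext x
  constructor
  · rintro ⟨u, huinv, rfl⟩
    have hu' : ∀ g : G, psi hpoly g u = u := fun g => (psi_eq_iff hpoly g u).mpr (huinv g)
    exact invpoly_mem hpoly hconst hp' hpc hmin' u.natDegree u le_rfl hu'
  · intro hx
    have h : Subring.closure (Sset k G ∪ {ι p}) ≤ invPolySubring k G := by
      rw [Subring.closure_le]
      rintro y (⟨⟨a, rfl⟩, hfix⟩ | rfl)
      · exact ⟨Polynomial.C a, fun g => by rw [RatFunc.algebraMap_C]; exact hfix g,
          (RatFunc.algebraMap_C a).symm⟩
      · exact ⟨p, hpinv, rfl⟩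
    exact h hx

end InvAux

theorem exists_min_nat {α : Type*} (P : α → Prop) (f : α → ℕ) (hex : ∃ a, P a) :
    ∃ a, P a ∧ ∀ b, P b → f a ≤ f b := by
  by_contra h
  push_neg at h
  have key : ∀ n a, P a → f a ≤ n → False := by
    intro n
    induction n with
    | zero =>
      intro a ha hle
      obtain ⟨b, hb, hlt⟩ := h a ha
      omega
    | succ n ih =>
      intro a ha hle
      obtain ⟨b, hb, hlt⟩ := h a ha
      exact ih b hb (by omega)
  obtain ⟨a, ha⟩ := hex
  exact key (f a) a ha le_rfl

open InvAux

set_option maxHeartbeats 2000000 in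
/-- Let `k` be a field and `G` a group acting on `k[t]` by ring
automorphisms mapping `k` into itself (the action is given here by its unique
extension to the fraction field `k(t) = RatFunc k`).  Then there is an invariant
polynomial `p` with `k(t)^G = k^G(p)`.  Moreover, if `k[t]^G ⊆ k` then
`k(t)^G = k^G`, and if `k[t]^G ⊄ k` then `p` may be taken to be any element of
minimal degree in `k[t]^G \ k`, and for such `p` one also has `k[t]^G = k^G[p]`.

Here everything is phrased inside `RatFunc k`:  `S` is the image of `k^G`,
`k^G(p)` is `Subfield.closure (S ∪ {p})` and `k^G[p]` is
`Subring.closure (S ∪ {p})`. -/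
theorem invariant_field_of_polynomial_ring_is_simple
    (k : Type*) [Field k] (G : Type*) [Group G]
    [MulSemiringAction G (RatFunc k)]
    (hpoly : ∀ (g : G) (p : Polynomial k), ∃ q : Polynomial k,
      g • (algebraMap (Polynomial k) (RatFunc k) p) = algebraMap (Polynomial k) (RatFunc k) q)
    (hconst : ∀ (g : G) (a : k), ∃ b : k, g • (RatFunc.C a) = RatFunc.C b) :
    (∃ p : Polynomial k,
      (∀ g : G, g • (algebraMap (Polynomial k) (RatFunc k) p)
          = algebraMap (Polynomial k) (RatFunc k) p) ∧
      FixedPoints.subfield G (RatFunc k) =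
        Subfield.closure
          ({x : RatFunc k | (∃ a : k, x = RatFunc.C a) ∧ ∀ g : G, g • x = x}
            ∪ {algebraMap (Polynomial k) (RatFunc k) p})) ∧
    ((∀ q : Polynomial k,
        (∀ g : G, g • (algebraMap (Polynomial k) (RatFunc k) q)
          = algebraMap (Polynomial k) (RatFunc k) q) → ∃ a : k, q = Polynomial.C a) →
      FixedPoints.subfield G (RatFunc k) =
        Subfield.closure {x : RatFunc k | (∃ a : k, x = RatFunc.C a) ∧ ∀ g : G, g • x = x}) ∧
    (∀ p : Polynomial k,
      (∀ g : G, g • (algebraMap (Polynomial k) (RatFunc k) p)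
          = algebraMap (Polynomial k) (RatFunc k) p) →
      (∀ a : k, p ≠ Polynomial.C a) →
      (∀ q : Polynomial k,
        (∀ g : G, g • (algebraMap (Polynomial k) (RatFunc k) q)
          = algebraMap (Polynomial k) (RatFunc k) q) →
        (∀ a : k, q ≠ Polynomial.C a) → p.natDegree ≤ q.natDegree) →
      FixedPoints.subfield G (RatFunc k) =
        Subfield.closure
          ({x : RatFunc k | (∃ a : k, x = RatFunc.C a) ∧ ∀ g : G, g • x = x}
            ∪ {algebraMap (Polynomial k) (RatFunc k) p}) ∧
      {x : RatFunc k | ∃ u : Polynomial k,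
          (∀ g : G, g • (algebraMap (Polynomial k) (RatFunc k) u)
            = algebraMap (Polynomial k) (RatFunc k) u) ∧
          x = algebraMap (Polynomial k) (RatFunc k) u} =
        ↑(Subring.closure
          ({x : RatFunc k | (∃ a : k, x = RatFunc.C a) ∧ ∀ g : G, g • x = x}
            ∪ {algebraMap (Polynomial k) (RatFunc k) p}))) := by
  have hS : {x : RatFunc k | (∃ a : k, x = RatFunc.C a) ∧ ∀ g : G, g • x = x} = Sset k G := rfl
  refine ⟨?_, ?_, ?_⟩
  · -- STATEMENT 1
    by_cases hex : ∃ q : Polynomial k,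
        (∀ g : G, g • (algebraMap (Polynomial k) (RatFunc k) q)
          = algebraMap (Polynomial k) (RatFunc k) q) ∧ ∀ a : k, q ≠ Polynomial.C a
    · -- there is a nonconstant invariant polynomial; pick one of minimal degree
      obtain ⟨p, ⟨hp1, hp2⟩, hmin'⟩ := exists_min_nat
        (fun q : Polynomial k =>
          (∀ g : G, g • (algebraMap (Polynomial k) (RatFunc k) q)
            = algebraMap (Polynomial k) (RatFunc k) q) ∧ (∀ a : k, q ≠ Polynomial.C a))
        (fun q => q.natDegree) hex
      have hmin : ∀ q : Polynomial k,
          (∀ g : G, g • (algebraMap (Polynomial k) (RatFunc k) q)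
            = algebraMap (Polynomial k) (RatFunc k) q) →
          (∀ a : k, q ≠ Polynomial.C a) → p.natDegree ≤ q.natDegree :=
        fun q h1 h2 => hmin' q ⟨h1, h2⟩
      refine ⟨p, hp1, ?_⟩
      rw [hS]
      exact stmt3_field hpoly hconst hp1 hp2 hmin
    · -- all invariant polynomials are constant
      push_neg at hex
      have hall : ∀ q : Polynomial k,
          (∀ g : G, g • (algebraMap (Polynomial k) (RatFunc k) q)
            = algebraMap (Polynomial k) (RatFunc k) q) → ∃ a : k, q = Polynomial.C a := by
        intro q hq
        obtain ⟨a, ha⟩ := hex q hq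
        exact ⟨a, ha⟩
      refine ⟨1, fun g => by rw [map_one, smul_one], ?_⟩
      rw [hS, stmt2 hpoly hconst hall]
      apply le_antisymm
      · exact Subfield.closure_mono Set.subset_union_left
      · rw [Subfield.closure_le]
        rintro x (hx | rfl)
        · exact Subfield.subset_closure hx
        · rw [map_one]; exact one_mem _
  · -- STATEMENT 2
    intro hall
    rw [hS]
    exact stmt2 hpoly hconst hall
  · -- STATEMENT 3
    intro p hp1 hp2 hmin
    rw [hS]
    exact ⟨stmt3_field hpoly hconst hp1 hp2 hmin, stmt3_ring hpoly hconst hp1 hp2 hmin⟩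
end

section
/- Let d ≥ 5 be odd. Let e_1,…,e_d and f_1,f_2,f_3 be the standard bases of ℂ^d and ℂ³ with dual bases x_1,…,x_d and y_1,y_2,y_3. Let ι : Sym²(ℂ^d)^∨ ⊗ Λ²(ℂ³)^∨ → Λ²((ℂ^d ⊗ ℂ³)^∨) be the linear embedding determined by ι((x_i x_j) ⊗ (y_k ∧ y_l)) = (x_i ⊗ y_k) ∧ (x_j ⊗ y_l) + (x_j ⊗ y_k) ∧ (x_i ⊗ y_l). Set ω = (x_5² − 2x_1x_2) ⊗ (y_2∧y_3) + (x_1² + x_3² + x_4²) ⊗ (y_1∧y_3) + (2x_4x_5 − 2x_2x_3) ⊗ (y_1∧y_2), and for each even j with 6 ≤ j ≤ d−1 set π_j = x_j² ⊗ (y_1∧y_2) + (x_j x_{j+1}) ⊗ (y_1∧y_3) + x_{j+1}² ⊗ (y_2∧y_3), and let κ = ω + Σ_j π_j. Then the kernel of the alternating bilinear form ι(κ) on ℂ^d ⊗ ℂ³ is exactly the one-dimensional subspace spanned by m = e_1⊗f_1 + e_2⊗f_2 + e_3⊗f_3; in particular ι(κ) has rank 3d − 1. -/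
open Matrix

/-- The alternating form `(x_i ⊗ y_k) ∧ (x_j ⊗ y_l)` on `ℂ^d ⊗ ℂ³`, written as
a skew-symmetric "matrix" indexed (via natural numbers, 0-based) by pairs
`(index in ℂ^d, index in ℂ³)`. -/
noncomputable def wedgeEntry (i k j l : ℕ) : (ℕ × ℕ) → (ℕ × ℕ) → ℂ := fun p q =>
  (if p = (i, k) ∧ q = (j, l) then 1 else 0) - (if p = (j, l) ∧ q = (i, k) then 1 else 0)

/-- The matrix of `ι((x_i x_j) ⊗ (y_k ∧ y_l)) =
(x_i ⊗ y_k) ∧ (x_j ⊗ y_l) + (x_j ⊗ y_k) ∧ (x_i ⊗ y_l)` (0-based indices). -/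
noncomputable def iotaEntry (i j k l : ℕ) : (ℕ × ℕ) → (ℕ × ℕ) → ℂ := fun p q =>
  wedgeEntry i k j l p q + wedgeEntry j k i l p q

/-- The matrix of `ι(ω)` where
`ω = (x₅² − 2x₁x₂) ⊗ (y₂∧y₃) + (x₁² + x₃² + x₄²) ⊗ (y₁∧y₃) + (2x₄x₅ − 2x₂x₃) ⊗ (y₁∧y₂)`
(indices in the paper are 1-based; here everything is 0-based). -/
noncomputable def omegaEntry : (ℕ × ℕ) → (ℕ × ℕ) → ℂ := fun p q =>
  iotaEntry 4 4 1 2 p q - 2 * iotaEntry 0 1 1 2 p q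
    + iotaEntry 0 0 0 2 p q + iotaEntry 2 2 0 2 p q + iotaEntry 3 3 0 2 p q
    + 2 * iotaEntry 3 4 0 1 p q - 2 * iotaEntry 1 2 0 1 p q

/-- The matrix of `ι(κ)` where `κ = ω + ∑_j π_j`, the sum being over even `j`
with `6 ≤ j ≤ d−1` (1-based), i.e. `j = 6 + 2r`, `0 ≤ r < (d−5)/2`, and
`π_j = x_j² ⊗ (y₁∧y₂) + (x_j x_{j+1}) ⊗ (y₁∧y₃) + x_{j+1}² ⊗ (y₂∧y₃)`
(0-based: `x_j` has index `5 + 2r`). -/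
noncomputable def kappaEntry (d : ℕ) : (ℕ × ℕ) → (ℕ × ℕ) → ℂ := fun p q =>
  omegaEntry p q +
    ∑ r ∈ Finset.range ((d - 5) / 2),
      (iotaEntry (5 + 2 * r) (5 + 2 * r) 0 1 p q
        + iotaEntry (5 + 2 * r) (6 + 2 * r) 0 2 p q
        + iotaEntry (6 + 2 * r) (6 + 2 * r) 1 2 p q)

/-- The skew-symmetric `3d × 3d` matrix of the alternating bilinear form
`ι(κ)` on `ℂ^d ⊗ ℂ³`. -/
noncomputable def kappaMat (d : ℕ) : Matrix (Fin d × Fin 3) (Fin d × Fin 3) ℂ :=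
  Matrix.of fun p q => kappaEntry d ((p.1 : ℕ), (p.2 : ℕ)) ((q.1 : ℕ), (q.2 : ℕ))

/-- The vector `m = e₁⊗f₁ + e₂⊗f₂ + e₃⊗f₃ ∈ ℂ^d ⊗ ℂ³`. -/
noncomputable def mVec (d : ℕ) : Fin d × Fin 3 → ℂ := fun p =>
  if (p.1 : ℕ) = (p.2 : ℕ) then 1 else 0

namespace KappaAux

noncomputable def dl (a b : ℕ) : ℂ := if a = b then 1 else 0

lemma dl_self (a : ℕ) : dl a a = 1 := if_pos rfl
lemma dl_ne {a b : ℕ} (h : a ≠ b) : dl a b = 0 := if_neg h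

noncomputable def Wext (d : ℕ) (w : Fin d × Fin 3 → ℂ) (i k : ℕ) : ℂ :=
  if h : i < d ∧ k < 3 then w (⟨i, h.1⟩, ⟨k, h.2⟩) else 0

lemma Wext_coe {d : ℕ} (w : Fin d × Fin 3 → ℂ) (p : Fin d × Fin 3) :
    Wext d w p.1 p.2 = w p := by
  rw [Wext, dif_pos (⟨p.1.isLt, p.2.isLt⟩ : (p.1:ℕ) < d ∧ (p.2:ℕ) < 3)]

lemma sum_ind {d : ℕ} (w : Fin d × Fin 3 → ℂ) (i k : ℕ) :
    ∑ p : Fin d × Fin 3, w p * (if ((p.1 : ℕ), (p.2 : ℕ)) = (i, k) then (1:ℂ) else 0)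
      = Wext d w i k := by
  by_cases h : i < d ∧ k < 3
  · rw [Finset.sum_eq_single ((⟨i, h.1⟩, ⟨k, h.2⟩) : Fin d × Fin 3)]
    · rw [if_pos rfl, mul_one, Wext, dif_pos h]
    · intro p _ hp
      rw [if_neg, mul_zero]
      intro hc
      apply hp
      exact Prod.ext (Fin.ext (congrArg Prod.fst hc)) (Fin.ext (congrArg Prod.snd hc))
    · intro hmem; exact absurd (Finset.mem_univ _) hmem
  · rw [Wext, dif_neg h, Finset.sum_eq_zero]
    intro p _
    rw [if_neg, mul_zero]
    intro hc
    rw [Prod.mk.injEq] at hc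
    exact h ⟨hc.1 ▸ p.1.isLt, hc.2 ▸ p.2.isLt⟩

lemma sum_pair_if {d : ℕ} (w : Fin d × Fin 3 → ℂ) (i k j l : ℕ) (q : Fin d × Fin 3) :
    ∑ p : Fin d × Fin 3,
        w p * (if ((p.1:ℕ),(p.2:ℕ)) = (i,k) ∧ ((q.1:ℕ),(q.2:ℕ)) = (j,l) then (1:ℂ) else 0)
      = dl (q.1:ℕ) j * dl (q.2:ℕ) l * Wext d w i k := by
  by_cases hq : ((q.1:ℕ),(q.2:ℕ)) = (j,l)
  · have h1 : (q.1:ℕ) = j := congrArg Prod.fst hq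
    have h2 : (q.2:ℕ) = l := congrArg Prod.snd hq
    simp only [hq, and_true]
    rw [sum_ind, h1, h2, dl_self, dl_self, one_mul, one_mul]
  · rw [Finset.sum_eq_zero (fun p _ => by rw [if_neg (fun hc => hq hc.2), mul_zero])]
    have hz : dl (q.1:ℕ) j * dl (q.2:ℕ) l = 0 := by
      by_cases h1 : (q.1:ℕ) = j
      · have h2 : (q.2:ℕ) ≠ l := fun h2 => hq (by rw [h1, h2])
        rw [dl_ne h2, mul_zero]
      · rw [dl_ne h1, zero_mul]
    rw [hz, zero_mul]

lemma sum_wedge {d : ℕ} (w : Fin d × Fin 3 → ℂ) (i k j l : ℕ) (q : Fin d × Fin 3) :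
    ∑ p : Fin d × Fin 3, w p * wedgeEntry i k j l ((p.1:ℕ),(p.2:ℕ)) ((q.1:ℕ),(q.2:ℕ))
      = dl (q.1:ℕ) j * dl (q.2:ℕ) l * Wext d w i k
        - dl (q.1:ℕ) i * dl (q.2:ℕ) k * Wext d w j l := by
  simp only [wedgeEntry, mul_sub]
  rw [Finset.sum_sub_distrib, sum_pair_if, sum_pair_if]

noncomputable def iotaPhi (W : ℕ → ℕ → ℂ) (i k a b c e : ℕ) : ℂ :=
  dl i b * dl k e * W a c - dl i a * dl k c * W b e
    + dl i a * dl k e * W b c - dl i b * dl k c * W a e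

lemma sum_iota {d : ℕ} (w : Fin d × Fin 3 → ℂ) (a b c e : ℕ) (q : Fin d × Fin 3) :
    ∑ p : Fin d × Fin 3, w p * iotaEntry a b c e ((p.1:ℕ),(p.2:ℕ)) ((q.1:ℕ),(q.2:ℕ))
      = iotaPhi (Wext d w) (q.1:ℕ) (q.2:ℕ) a b c e := by
  simp only [iotaEntry, mul_add]
  rw [Finset.sum_add_distrib, sum_wedge, sum_wedge, iotaPhi]
  ring

noncomputable def Phi (n : ℕ) (W : ℕ → ℕ → ℂ) (i k : ℕ) : ℂ :=
  iotaPhi W i k 4 4 1 2 - 2 * iotaPhi W i k 0 1 1 2 + iotaPhi W i k 0 0 0 2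
    + iotaPhi W i k 2 2 0 2 + iotaPhi W i k 3 3 0 2 + 2 * iotaPhi W i k 3 4 0 1
    - 2 * iotaPhi W i k 1 2 0 1
    + ∑ r ∈ Finset.range n,
        (iotaPhi W i k (5+2*r) (5+2*r) 0 1 + iotaPhi W i k (5+2*r) (6+2*r) 0 2
          + iotaPhi W i k (6+2*r) (6+2*r) 1 2)

lemma master {d : ℕ} (w : Fin d × Fin 3 → ℂ) (q : Fin d × Fin 3) :
    Matrix.vecMul w (kappaMat d) q = Phi ((d-5)/2) (Wext d w) (q.1:ℕ) (q.2:ℕ) := by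
  simp only [Matrix.vecMul, dotProduct, kappaMat, Matrix.of_apply]
  have e1 : ∀ p : Fin d × Fin 3,
      w p * kappaEntry d ((p.1:ℕ),(p.2:ℕ)) ((q.1:ℕ),(q.2:ℕ))
        = (w p * iotaEntry 4 4 1 2 ((p.1:ℕ),(p.2:ℕ)) ((q.1:ℕ),(q.2:ℕ))
            - 2 * (w p * iotaEntry 0 1 1 2 ((p.1:ℕ),(p.2:ℕ)) ((q.1:ℕ),(q.2:ℕ)))
            + w p * iotaEntry 0 0 0 2 ((p.1:ℕ),(p.2:ℕ)) ((q.1:ℕ),(q.2:ℕ))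
            + w p * iotaEntry 2 2 0 2 ((p.1:ℕ),(p.2:ℕ)) ((q.1:ℕ),(q.2:ℕ))
            + w p * iotaEntry 3 3 0 2 ((p.1:ℕ),(p.2:ℕ)) ((q.1:ℕ),(q.2:ℕ))
            + 2 * (w p * iotaEntry 3 4 0 1 ((p.1:ℕ),(p.2:ℕ)) ((q.1:ℕ),(q.2:ℕ)))
            - 2 * (w p * iotaEntry 1 2 0 1 ((p.1:ℕ),(p.2:ℕ)) ((q.1:ℕ),(q.2:ℕ))))
          + ∑ r ∈ Finset.range ((d-5)/2),
              (w p * iotaEntry (5+2*r) (5+2*r) 0 1 ((p.1:ℕ),(p.2:ℕ)) ((q.1:ℕ),(q.2:ℕ))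
                + w p * iotaEntry (5+2*r) (6+2*r) 0 2 ((p.1:ℕ),(p.2:ℕ)) ((q.1:ℕ),(q.2:ℕ))
                + w p * iotaEntry (6+2*r) (6+2*r) 1 2 ((p.1:ℕ),(p.2:ℕ)) ((q.1:ℕ),(q.2:ℕ))) := by
    intro p
    rw [kappaEntry, omegaEntry, mul_add, Finset.mul_sum]
    congr 1
    · ring
    · exact Finset.sum_congr rfl fun r _ => by ring
  rw [Finset.sum_congr rfl fun p _ => e1 p]
  rw [Finset.sum_add_distrib]
  rw [Finset.sum_comm]
  simp only [Finset.sum_add_distrib, Finset.sum_sub_distrib, ← Finset.mul_sum]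
  simp only [sum_iota]
  rw [Phi]
  congr 1
  rw [← Finset.sum_add_distrib, ← Finset.sum_add_distrib]

lemma pi_sum_small (n : ℕ) (W : ℕ → ℕ → ℂ) (i k : ℕ) (hi : i < 5) :
    ∑ r ∈ Finset.range n,
        (iotaPhi W i k (5+2*r) (5+2*r) 0 1 + iotaPhi W i k (5+2*r) (6+2*r) 0 2
          + iotaPhi W i k (6+2*r) (6+2*r) 1 2) = 0 :=
  Finset.sum_eq_zero fun r _ => by
    simp only [iotaPhi]
    rw [dl_ne (show i ≠ 5+2*r by omega), dl_ne (show i ≠ 6+2*r by omega)]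
    ring

lemma omega_part_zero (W : ℕ → ℕ → ℂ) (i k : ℕ) (hi : 5 ≤ i) :
    iotaPhi W i k 4 4 1 2 - 2 * iotaPhi W i k 0 1 1 2 + iotaPhi W i k 0 0 0 2
      + iotaPhi W i k 2 2 0 2 + iotaPhi W i k 3 3 0 2 + 2 * iotaPhi W i k 3 4 0 1
      - 2 * iotaPhi W i k 1 2 0 1 = 0 := by
  simp only [iotaPhi]
  rw [dl_ne (show i ≠ 4 by omega), dl_ne (show i ≠ 0 by omega), dl_ne (show i ≠ 1 by omega),
      dl_ne (show i ≠ 2 by omega), dl_ne (show i ≠ 3 by omega)]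
  ring

lemma pi_sum_at (n : ℕ) (W : ℕ → ℕ → ℂ) (i k r0 : ℕ) (hr0 : r0 < n)
    (hi : i = 5+2*r0 ∨ i = 6+2*r0) :
    ∑ r ∈ Finset.range n,
        (iotaPhi W i k (5+2*r) (5+2*r) 0 1 + iotaPhi W i k (5+2*r) (6+2*r) 0 2
          + iotaPhi W i k (6+2*r) (6+2*r) 1 2)
      = iotaPhi W i k (5+2*r0) (5+2*r0) 0 1 + iotaPhi W i k (5+2*r0) (6+2*r0) 0 2
          + iotaPhi W i k (6+2*r0) (6+2*r0) 1 2 := by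
  rw [Finset.sum_eq_single r0]
  · intro r _ hr
    simp only [iotaPhi]
    rw [dl_ne (show i ≠ 5+2*r by omega), dl_ne (show i ≠ 6+2*r by omega)]
    ring
  · intro hmem; exact absurd (Finset.mem_range.2 hr0) hmem

lemma Phi_big (n : ℕ) (W : ℕ → ℕ → ℂ) (i k r0 : ℕ) (hr0 : r0 < n)
    (hi : i = 5+2*r0 ∨ i = 6+2*r0) :
    Phi n W i k
      = iotaPhi W i k (5+2*r0) (5+2*r0) 0 1 + iotaPhi W i k (5+2*r0) (6+2*r0) 0 2
          + iotaPhi W i k (6+2*r0) (6+2*r0) 1 2 := by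
  rw [Phi, pi_sum_at n W i k r0 hr0 hi, omega_part_zero W i k (by omega), zero_add]

lemma Phi_small (n : ℕ) (W : ℕ → ℕ → ℂ) (i k : ℕ) (hi : i < 5) :
    Phi n W i k
      = iotaPhi W i k 4 4 1 2 - 2 * iotaPhi W i k 0 1 1 2 + iotaPhi W i k 0 0 0 2
        + iotaPhi W i k 2 2 0 2 + iotaPhi W i k 3 3 0 2 + 2 * iotaPhi W i k 3 4 0 1
        - 2 * iotaPhi W i k 1 2 0 1 := by
  rw [Phi, pi_sum_small n W i k hi, add_zero]

lemma forward {d n : ℕ} (hn : d = 2*n+5) (W : ℕ → ℕ → ℂ)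
    (h : ∀ i k, i < d → k < 3 → Phi n W i k = 0) :
    (W 1 1 = W 0 0 ∧ W 2 2 = W 0 0) ∧
      ∀ i k, i < d → k < 3 → i ≠ k → W i k = 0 := by
  have e00 := h 0 0 (by omega) (by omega)
  have e01 := h 0 1 (by omega) (by omega)
  have e02 := h 0 2 (by omega) (by omega)
  have e10 := h 1 0 (by omega) (by omega)
  have e11 := h 1 1 (by omega) (by omega)
  have e12 := h 1 2 (by omega) (by omega)
  have e20 := h 2 0 (by omega) (by omega)
  have e21 := h 2 1 (by omega) (by omega)
  have e30 := h 3 0 (by omega) (by omega)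
  have e31 := h 3 1 (by omega) (by omega)
  have e32 := h 3 2 (by omega) (by omega)
  have e40 := h 4 0 (by omega) (by omega)
  have e41 := h 4 1 (by omega) (by omega)
  have e42 := h 4 2 (by omega) (by omega)
  rw [Phi_small n W 0 0 (by norm_num)] at e00
  rw [Phi_small n W 0 1 (by norm_num)] at e01
  rw [Phi_small n W 0 2 (by norm_num)] at e02
  rw [Phi_small n W 1 0 (by norm_num)] at e10
  rw [Phi_small n W 1 1 (by norm_num)] at e11
  rw [Phi_small n W 1 2 (by norm_num)] at e12
  rw [Phi_small n W 2 0 (by norm_num)] at e20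
  rw [Phi_small n W 2 1 (by norm_num)] at e21
  rw [Phi_small n W 3 0 (by norm_num)] at e30
  rw [Phi_small n W 3 1 (by norm_num)] at e31
  rw [Phi_small n W 3 2 (by norm_num)] at e32
  rw [Phi_small n W 4 0 (by norm_num)] at e40
  rw [Phi_small n W 4 1 (by norm_num)] at e41
  rw [Phi_small n W 4 2 (by norm_num)] at e42
  simp only [iotaPhi] at e00 e01 e02 e10 e11 e12 e20 e21 e30 e31 e32 e40 e41 e42
  norm_num [dl] at e00 e01 e02 e10 e11 e12 e20 e21 e30 e31 e32 e40 e41 e42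
  -- e00 : -W 0 2 - W 0 2 = 0, e01 : W 1 2 = 0, e02 : -(2*W 1 1)+(W 0 0+W 0 0)=0,
  -- e10 : W 2 1 = 0, e11 : 2*W 0 2 - 2*W 2 0 = 0, e12 : W 0 1 = 0,
  -- e20 : -W 2 2 - W 2 2 + 2*W 1 1 = 0, e21 : W 1 0 = 0,
  -- e30 : -W 3 2 - W 3 2 + -(2*W 4 1) = 0, e31 : W 4 0 = 0, e32 : W 3 0 = 0,
  -- e40 : W 3 1 = 0, e41 : -W 4 2 - W 4 2 + 2*W 3 0 = 0, e42 : W 4 1 = 0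
  have W02 : W 0 2 = 0 := by linear_combination (-(1:ℂ)/2) * e00
  have h11 : W 1 1 = W 0 0 := by linear_combination (-(1:ℂ)/2) * e02
  have W20 : W 2 0 = 0 := by linear_combination (-(1:ℂ)/2) * e11 + W02
  have h22 : W 2 2 = W 0 0 := by linear_combination (-(1:ℂ)/2) * e20 + h11
  have W42 : W 4 2 = 0 := by linear_combination (-(1:ℂ)/2) * e41 + e32
  have W32 : W 3 2 = 0 := by linear_combination (-(1:ℂ)/2) * e30 - e42
  have big : ∀ r, r < n →
      (W (5+2*r) 0 = 0 ∧ W (5+2*r) 1 = 0 ∧ W (5+2*r) 2 = 0 ∧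
       W (6+2*r) 0 = 0 ∧ W (6+2*r) 1 = 0 ∧ W (6+2*r) 2 = 0) := by
    intro r hr
    have b0 := h (5+2*r) 0 (by omega) (by omega)
    have b1 := h (5+2*r) 1 (by omega) (by omega)
    have b2 := h (5+2*r) 2 (by omega) (by omega)
    have b3 := h (6+2*r) 0 (by omega) (by omega)
    have b4 := h (6+2*r) 1 (by omega) (by omega)
    have b5 := h (6+2*r) 2 (by omega) (by omega)
    rw [Phi_big n W (5+2*r) 0 r hr (by omega)] at b0
    rw [Phi_big n W (5+2*r) 1 r hr (by omega)] at b1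
    rw [Phi_big n W (5+2*r) 2 r hr (by omega)] at b2
    rw [Phi_big n W (6+2*r) 0 r hr (by omega)] at b3
    rw [Phi_big n W (6+2*r) 1 r hr (by omega)] at b4
    rw [Phi_big n W (6+2*r) 2 r hr (by omega)] at b5
    simp only [iotaPhi] at b0 b1 b2 b3 b4 b5
    rw [dl_self, dl_ne (show (5+2*r:ℕ) ≠ 6+2*r by omega)] at b0 b1 b2
    rw [dl_self, dl_ne (show (6+2*r:ℕ) ≠ 5+2*r by omega)] at b3 b4 b5
    norm_num [dl] at b0 b1 b2 b3 b4 b5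
    -- b0 : -W a 1 - W a 1 + -W b 2 = 0 ; b1 : W a 0 = 0 ; b2 : W b 0 = 0
    -- b3 : W a 2 = 0 ; b4 : -W b 2 - W b 2 = 0 ; b5 : W a 0 + (W b 1 + W b 1) = 0
    have hb2 : W (6+2*r) 2 = 0 := by linear_combination (-(1:ℂ)/2) * b4
    refine ⟨b1, ?_, b3, b2, ?_, hb2⟩
    · linear_combination (-(1:ℂ)/2) * b0 - (1/2 : ℂ) * hb2
    · linear_combination (1/2 : ℂ) * b5 - (1/2 : ℂ) * b1
  refine ⟨⟨h11, h22⟩, ?_⟩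
  intro i k hi hk hik
  by_cases hi5 : i < 5
  · interval_cases i <;> interval_cases k <;>
      first
        | exact absurd rfl hik
        | assumption
  · obtain ⟨r, hr, hio⟩ : ∃ r, r < n ∧ (i = 5 + 2*r ∨ i = 6 + 2*r) :=
      ⟨(i - 5) / 2, by omega, by omega⟩
    obtain ⟨B0, B1, B2, B3, B4, B5⟩ := big r hr
    rcases hio with h5 | h6
    · subst h5; interval_cases k <;> assumption
    · subst h6; interval_cases k <;> assumption

lemma Phi_mVec {d n : ℕ} (hn : d = 2*n+5) (c : ℂ) (i k : ℕ) :
    Phi n (Wext d (c • mVec d)) i k = 0 := by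
  set W := Wext d (c • mVec d) with hW
  have hz : ∀ a b : ℕ, a ≠ b → W a b = 0 := by
    intro a b hab
    rw [hW, Wext]
    split
    · simp [mVec, hab]
    · rfl
  have h00 : W 0 0 = c := by
    rw [hW, Wext, dif_pos ⟨by omega, by omega⟩]; simp [mVec]
  have h11 : W 1 1 = c := by
    rw [hW, Wext, dif_pos ⟨by omega, by omega⟩]; simp [mVec]
  have h22 : W 2 2 = c := by
    rw [hW, Wext, dif_pos ⟨by omega, by omega⟩]; simp [mVec]
  rw [Phi]
  rw [Finset.sum_eq_zero (fun r _ => by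
    simp only [iotaPhi]
    rw [hz (5+2*r) 0 (by omega), hz (5+2*r) 1 (by omega), hz (5+2*r) 2 (by omega),
        hz (6+2*r) 0 (by omega), hz (6+2*r) 1 (by omega), hz (6+2*r) 2 (by omega)]
    ring)]
  simp only [iotaPhi]
  rw [hz 4 1 (by omega), hz 4 2 (by omega), hz 0 1 (by omega), hz 1 2 (by omega),
      hz 0 2 (by omega), hz 2 0 (by omega), hz 3 0 (by omega), hz 3 2 (by omega),
      hz 3 1 (by omega), hz 4 0 (by omega), hz 1 0 (by omega), hz 2 1 (by omega),
      h00, h11, h22]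
  ring

lemma wedge_add (i k j l : ℕ) (x y : ℕ × ℕ) :
    wedgeEntry i k j l x y + wedgeEntry i k j l y x = 0 := by
  simp only [wedgeEntry]
  by_cases a1 : x = (i,k) <;> by_cases a2 : y = (j,l) <;> by_cases a3 : x = (j,l) <;>
    by_cases a4 : y = (i,k) <;> simp [a1, a2, a3, a4] <;>
    by_cases b1 : i = j <;> by_cases b2 : k = l <;> simp [b1, b2, eq_comm]

lemma iota_add (i j k l : ℕ) (x y : ℕ × ℕ) :
    iotaEntry i j k l x y + iotaEntry i j k l y x = 0 := by
  simp only [iotaEntry]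
  linear_combination wedge_add i k j l x y + wedge_add j k i l x y

lemma kappa_add (d : ℕ) (x y : ℕ × ℕ) : kappaEntry d x y + kappaEntry d y x = 0 := by
  simp only [kappaEntry, omegaEntry]
  have hs : (∑ r ∈ Finset.range ((d-5)/2),
      (iotaEntry (5+2*r) (5+2*r) 0 1 x y + iotaEntry (5+2*r) (6+2*r) 0 2 x y
        + iotaEntry (6+2*r) (6+2*r) 1 2 x y))
      + (∑ r ∈ Finset.range ((d-5)/2),
      (iotaEntry (5+2*r) (5+2*r) 0 1 y x + iotaEntry (5+2*r) (6+2*r) 0 2 y x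
        + iotaEntry (6+2*r) (6+2*r) 1 2 y x)) = 0 := by
    rw [← Finset.sum_add_distrib]
    exact Finset.sum_eq_zero fun r _ => by
      linear_combination iota_add (5+2*r) (5+2*r) 0 1 x y
        + iota_add (5+2*r) (6+2*r) 0 2 x y + iota_add (6+2*r) (6+2*r) 1 2 x y
  linear_combination hs + iota_add 4 4 1 2 x y - 2 * iota_add 0 1 1 2 x y
    + iota_add 0 0 0 2 x y + iota_add 2 2 0 2 x y + iota_add 3 3 0 2 x y
    + 2 * iota_add 3 4 0 1 x y - 2 * iota_add 1 2 0 1 x y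

end KappaAux

open KappaAux

/-- for odd `d ≥ 5`, the kernel of the alternating bilinear form
`ι(κ)` on `ℂ^d ⊗ ℂ³` (the set of `w` with `ι(κ)(w, u) = 0` for all `u`, i.e.
`wᵀ · M = 0`) is exactly the line spanned by `m = e₁⊗f₁ + e₂⊗f₂ + e₃⊗f₃`;
in particular `ι(κ)` has rank `3d − 1`. -/
theorem kernel_of_iota_kappa (d : ℕ) (hd : 5 ≤ d) (hodd : Odd d) :
    (∀ w : Fin d × Fin 3 → ℂ,
      Matrix.vecMul w (kappaMat d) = 0 ↔ ∃ c : ℂ, w = c • mVec d) ∧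
    (kappaMat d).rank = 3 * d - 1 := by
  obtain ⟨m0, hm0⟩ := hodd
  have hn : d = 2 * ((d - 5) / 2) + 5 := by omega
  have key : ∀ w : Fin d × Fin 3 → ℂ,
      Matrix.vecMul w (kappaMat d) = 0 ↔ ∃ c : ℂ, w = c • mVec d := by
    intro w
    constructor
    · intro h0
      have h : ∀ i k, i < d → k < 3 → Phi ((d - 5) / 2) (Wext d w) i k = 0 := by
        intro i k hi hk
        have h1 := congrFun h0 (⟨i, hi⟩, ⟨k, hk⟩)
        rw [master] at h1
        simpa using h1
      obtain ⟨⟨h11, h22⟩, hoff⟩ := forward hn (Wext d w) h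
      refine ⟨Wext d w 0 0, funext fun p => ?_⟩
      rw [← Wext_coe w p]
      simp only [Pi.smul_apply, mVec, smul_eq_mul]
      by_cases hik : (p.1 : ℕ) = (p.2 : ℕ)
      · rw [if_pos hik, mul_one, hik]
        have hk3 : (p.2 : ℕ) = 0 ∨ (p.2 : ℕ) = 1 ∨ (p.2 : ℕ) = 2 := by omega
        rcases hk3 with h' | h' | h' <;> rw [h']
        · exact h11
        · exact h22
      · rw [if_neg hik, mul_zero]
        exact hoff _ _ p.1.isLt p.2.isLt hik
    · rintro ⟨c, rfl⟩
      funext q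
      rw [master]
      exact Phi_mVec hn c _ _
  refine ⟨key, ?_⟩
  have hskew : (kappaMat d)ᵀ = -(kappaMat d) := by
    ext p q
    simp only [Matrix.transpose_apply, Matrix.neg_apply, kappaMat, Matrix.of_apply]
    linear_combination kappa_add d ((q.1 : ℕ), (q.2 : ℕ)) ((p.1 : ℕ), (p.2 : ℕ))
  have hker : ∀ w : Fin d × Fin 3 → ℂ,
      (kappaMat d).mulVec w = 0 ↔ Matrix.vecMul w (kappaMat d) = 0 := by
    intro w
    have hv : Matrix.vecMul w (kappaMat d) = -(kappaMat d).mulVec w := by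
      rw [← Matrix.mulVec_transpose, hskew, Matrix.neg_mulVec]
    rw [hv, neg_eq_zero]
  have hkerEq : LinearMap.ker (kappaMat d).mulVecLin = Submodule.span ℂ {mVec d} := by
    ext w
    rw [LinearMap.mem_ker, Matrix.mulVecLin_apply, Submodule.mem_span_singleton, hker w, key w]
    constructor
    · rintro ⟨c, hc⟩; exact ⟨c, hc.symm⟩
    · rintro ⟨c, hc⟩; exact ⟨c, hc.symm⟩
  have hm : mVec d ≠ 0 := by
    intro h0
    have h1 := congrFun h0 ((⟨0, by omega⟩, ⟨0, by omega⟩) : Fin d × Fin 3)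
    simp [mVec] at h1
  have hrn := LinearMap.finrank_range_add_finrank_ker (kappaMat d).mulVecLin
  rw [hkerEq, finrank_span_singleton hm, Module.finrank_fintype_fun_eq_card] at hrn
  have hcard : Fintype.card (Fin d × Fin 3) = d * 3 := by simp
  rw [hcard] at hrn
  unfold Matrix.rank
  omega
end

section
/- Let T = (ℂ*)ⁿ act diagonally on ℂ^m with integral weights χ_1,…,χ_m ∈ ℤⁿ, i.e. t·(v_1,…,v_m) = (t^{χ_1}v_1,…,t^{χ_m}v_m) where t^{χ} = t_1^{χ(1)}⋯t_n^{χ(n)}. Then for v ∈ ℂ^m, the origin 0 lies in the closure (in the Euclidean topology of ℂ^m) of the orbit {t·v : t ∈ T} if and only if 0 does not lie in the convex hull in ℝⁿ of the support {χ_i : v_i ≠ 0} of v. In other words, v is T-unstable if and only if 0 ∉ Wt(v). -/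
/-- let `T = (ℂ*)ⁿ` act diagonally on `ℂ^m` with integral
weights `χ₁, …, χ_m ∈ ℤⁿ`, i.e. `t·v = (t^{χ_1} v_1, …, t^{χ_m} v_m)` with
`t^χ = t_1^{χ(1)} ⋯ t_n^{χ(n)}`.  Then `0` lies in the (Euclidean) closure of
the orbit `T·v` if and only if `0` does **not** lie in the convex hull in `ℝⁿ`
of the support `{χ_i : v_i ≠ 0}` of `v`:  `v` is `T`-unstable iff `0 ∉ Wt(v)`. -/
theorem torus_unstable_iff_zero_not_in_weight_polytope
    (n m : ℕ) (χ : Fin m → Fin n → ℤ) (v : Fin m → ℂ) :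
    (0 : Fin m → ℂ) ∈ closure
        {w : Fin m → ℂ | ∃ t : Fin n → ℂ, (∀ j, t j ≠ 0) ∧
          w = fun i => (∏ j, t j ^ χ i j) * v i} ↔
      (0 : Fin n → ℝ) ∉ convexHull ℝ
        {x : Fin n → ℝ | ∃ i : Fin m, v i ≠ 0 ∧ x = fun j => (χ i j : ℝ)} := by
  constructor
  · -- 0 in closure of orbit → 0 not in convex hull
    intro hcl h0
    obtain ⟨ι, _, w, z, hw0, hw1, hz, hzsum⟩ := mem_convexHull_iff_exists_fintype.1 h0
    simp only [Set.mem_setOf_eq] at hz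
    choose g hg hzg using hz
    -- the invariant function Φ
    set Φ : (Fin m → ℂ) → ℝ := fun u => ∏ k, ‖u (g k)‖ ^ (w k) with hΦdef
    have hΦcont : Continuous Φ := by
      apply continuous_finset_prod
      intro k _
      exact (Real.continuous_rpow_const (hw0 k)).comp
        (continuous_norm.comp (continuous_apply (g k)))
    set C : ℝ := ∏ k, ‖v (g k)‖ ^ (w k) with hC
    have hCpos : 0 < C := Finset.prod_pos fun k _ =>
      Real.rpow_pos_of_pos (by simpa using hg k) _
    have horb : {u : Fin m → ℂ | ∃ t : Fin n → ℂ, (∀ j, t j ≠ 0) ∧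
          u = fun i => (∏ j, t j ^ χ i j) * v i} ⊆ Φ ⁻¹' {C} := by
      rintro u ⟨t, ht, rfl⟩
      simp only [Set.mem_preimage, Set.mem_singleton_iff, hΦdef]
      have habs : ∀ j, (0:ℝ) < ‖t j‖ := fun j => by
        simpa using (norm_pos_iff.mpr (ht j))
      have key : ∀ k : ι, ‖(∏ j, t j ^ χ (g k) j) * v (g k)‖ ^ w k
          = (∏ j, ‖t j‖ ^ ((χ (g k) j : ℝ) * w k))
              * ‖v (g k)‖ ^ w k := by
        intro k
        rw [norm_mul, Real.mul_rpow (norm_nonneg _) (norm_nonneg _)]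
        congr 1
        rw [norm_prod]
        simp only [norm_zpow]
        rw [← Real.finset_prod_rpow _ _
          (fun j _ => zpow_nonneg (norm_nonneg _) _) _]
        refine Finset.prod_congr rfl fun j _ => ?_
        rw [← Real.rpow_intCast (‖t j‖) (χ (g k) j),
          ← Real.rpow_mul (norm_nonneg _)]
      calc (∏ k, ‖(∏ j, t j ^ χ (g k) j) * v (g k)‖ ^ w k)
          = ∏ k, ((∏ j, ‖t j‖ ^ ((χ (g k) j : ℝ) * w k))
              * ‖v (g k)‖ ^ w k) := Finset.prod_congr rfl fun k _ => key k
        _ = (∏ k, ∏ j, ‖t j‖ ^ ((χ (g k) j : ℝ) * w k)) * C := by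
            rw [Finset.prod_mul_distrib]
        _ = (∏ j, ‖t j‖ ^ (∑ k, (χ (g k) j : ℝ) * w k)) * C := by
            rw [Finset.prod_comm]
            congr 1
            exact Finset.prod_congr rfl fun j _ =>
              (Real.rpow_sum_of_pos (habs j) _ _).symm
        _ = C := by
            have hexp : ∀ j, (∑ k, (χ (g k) j : ℝ) * w k) = 0 := by
              intro j
              have := congrFun hzsum j
              simp only [Finset.sum_apply, Pi.smul_apply, Pi.zero_apply,
                smul_eq_mul] at this
              calc (∑ k, (χ (g k) j : ℝ) * w k) = ∑ k, w k * z k j := by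
                    refine Finset.sum_congr rfl fun k _ => ?_
                    rw [hzg k, mul_comm]
                _ = 0 := this
            simp [hexp]
    have hΦ0 : Φ 0 = C := by
      have := closure_minimal horb (isClosed_singleton.preimage hΦcont) hcl
      simp only [Set.mem_preimage, Set.mem_singleton_iff] at this
      exact this
    -- but Φ 0 = 0
    obtain ⟨k, _, hk⟩ : ∃ k ∈ Finset.univ, w k ≠ 0 :=
      Finset.exists_ne_zero_of_sum_ne_zero (by rw [hw1]; norm_num)
    have : Φ 0 = 0 := by
      simp only [hΦdef, Pi.zero_apply, norm_zero]
      exact Finset.prod_eq_zero (Finset.mem_univ k) (Real.zero_rpow hk)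
    rw [hΦ0] at this
    exact absurd this hCpos.ne'
  · -- 0 not in convex hull → 0 in closure of orbit
    intro h0
    set S : Set (Fin n → ℝ) :=
      {x | ∃ i : Fin m, v i ≠ 0 ∧ x = fun j => (χ i j : ℝ)} with hSdef
    have hfin : S.Finite := Set.Finite.subset
      (Set.finite_range (fun i : Fin m => fun j => (χ i j : ℝ)))
      (by rintro x ⟨i, _, rfl⟩; exact ⟨i, rfl⟩)
    obtain ⟨f, u, hfu, hub⟩ := geometric_hahn_banach_point_closed
      (convex_convexHull ℝ S) (hfin.isClosed_convexHull (𝕜 := ℝ)) h0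
    rw [map_zero] at hfu
    set ℓ : Fin n → ℝ := fun j => f (Pi.single j 1) with hl
    have hf : ∀ x : Fin n → ℝ, f x = ∑ j, x j * ℓ j := by
      intro x
      conv_lhs => rw [pi_eq_sum_univ x, map_sum]
      refine Finset.sum_congr rfl fun j _ => ?_
      rw [map_smul, smul_eq_mul]
      have h1 : (fun j1 => if j = j1 then (1:ℝ) else 0) = Pi.single j 1 := by
        funext j1
        simp [Pi.single_apply, eq_comm]
      rw [h1]
    refine mem_closure_of_tendsto (f := fun r : ℝ => fun i =>
      (∏ j, (((r ^ ℓ j : ℝ) : ℂ)) ^ χ i j) * v i)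
      (b := nhdsWithin 0 (Set.Ioi 0)) ?_ ?_
    · rw [tendsto_pi_nhds]
      intro i
      by_cases hvi : v i = 0
      · simp [hvi]
      · have hfx : (0:ℝ) < ∑ j, (χ i j : ℝ) * ℓ j := by
          have hmem : (fun j => (χ i j : ℝ)) ∈ convexHull ℝ S :=
            subset_convexHull ℝ S ⟨i, hvi, rfl⟩
          have := hub _ hmem
          rw [hf] at this
          linarith
        have heq : ∀ r ∈ Set.Ioi (0:ℝ),
            ((r ^ (∑ j, (χ i j : ℝ) * ℓ j) : ℝ) : ℂ) * v i
            = (∏ j, (((r ^ ℓ j : ℝ) : ℂ)) ^ χ i j) * v i := by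
          intro r hr
          congr 1
          rw [Real.rpow_sum_of_pos hr,
            show (∏ x, r ^ ((χ i x : ℝ) * ℓ x)) = ∏ x, (r ^ ℓ x) ^ (χ i x) from
              Finset.prod_congr rfl fun j _ => by
                rw [mul_comm, Real.rpow_mul (le_of_lt hr), Real.rpow_intCast]]
          push_cast
          ring
        have hmodel : Filter.Tendsto
            (fun r : ℝ => ((r ^ (∑ j, (χ i j : ℝ) * ℓ j) : ℝ) : ℂ) * v i)
            (nhdsWithin 0 (Set.Ioi 0)) (nhds 0) := by
          have h1 : Filter.Tendsto (fun r : ℝ => r ^ (∑ j, (χ i j : ℝ) * ℓ j))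
              (nhdsWithin 0 (Set.Ioi 0)) (nhds 0) := by
            have := (Real.continuousAt_rpow_const 0 _ (Or.inr hfx.le)).tendsto
            rw [Real.zero_rpow hfx.ne'] at this
            exact this.mono_left nhdsWithin_le_nhds
          have h2 := ((Complex.continuous_ofReal.tendsto 0).comp h1).mul_const (v i)
          simpa using h2
        refine hmodel.congr' ?_
        filter_upwards [eventually_mem_nhdsWithin] with r hr
        exact heq r hr
    · filter_upwards [eventually_mem_nhdsWithin] with r hr
      refine ⟨fun j => ((r ^ ℓ j : ℝ) : ℂ), fun j => ?_, rfl⟩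
      exact Complex.ofReal_ne_zero.mpr (Real.rpow_pos_of_pos hr _).ne'
end
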